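/- Over the real numbers, the only matrices among the canonical list {[[0,Φ_n],[Φ_nᵀ,0]], ±P_n, ±Q_n(c) with c > 0} that are positive definite are Q_1(c) = diag(c, c) with c > 0; consequently, every positive definite symmetric 2n×2n real matrix A that is symplectically congruent to a block-direct sum of canonical matrices must be symplectically congruent to D ⊕ D with D = diag(α_1,...,α_n), α_i > 0. -/

import Mathlib

open Matrix

/-- The standard symplectic matrix `Ω_n = [[0, I_n], [-I_n, 0]]`. -/
def Omega (n : ℕ) : Matrix (Fin n ⊕ Fin n) (Fin n ⊕ Fin n) ℝ :=
  Matrix.fromBlocks 0 1 (-1) 0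

/-- The canonical symmetric matrix `P_n`. -/
def Pmat (n : ℕ) : Matrix (Fin n ⊕ Fin n) (Fin n ⊕ Fin n) ℝ :=
  Matrix.fromBlocks
    (Matrix.of fun i j => if (i : ℕ) + (j : ℕ) + 1 = n then 1 else 0) 0 0
    (Matrix.of fun i j => if (i : ℕ) + (j : ℕ) = n then 1 else 0)

/-- The canonical symmetric matrix `Q_n(c)` (odd and even `n` cases). -/
def Qmat (n : ℕ) (c : ℝ) : Matrix (Fin n ⊕ Fin n) (Fin n ⊕ Fin n) ℝ :=
  if n % 2 = 1 then
    Matrix.fromBlocks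
      (Matrix.of fun i j => if (i : ℕ) + (j : ℕ) + 1 = n then (-1) ^ (i : ℕ) * c else 0)
      (Matrix.of fun i j => if (i : ℕ) + 1 = (j : ℕ) then 1 else 0)
      (Matrix.of fun i j => if (j : ℕ) + 1 = (i : ℕ) then 1 else 0)
      (Matrix.of fun i j => if (i : ℕ) + (j : ℕ) + 1 = n then (-1) ^ (i : ℕ) * c else 0)
  else
    Matrix.fromBlocks 0
      (Matrix.of fun i j =>
        if (j : ℕ) = (i : ℕ) + 2 then 1
        else if (i : ℕ) % 2 = 0 ∧ (j : ℕ) = (i : ℕ) + 1 then 1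
        else if (i : ℕ) % 2 = 1 ∧ (j : ℕ) + 1 = (i : ℕ) then -c ^ 2 else 0)
      (Matrix.of fun i j =>
        if (i : ℕ) = (j : ℕ) + 2 then 1
        else if (j : ℕ) % 2 = 0 ∧ (i : ℕ) = (j : ℕ) + 1 then 1
        else if (j : ℕ) % 2 = 1 ∧ (i : ℕ) + 1 = (j : ℕ) then -c ^ 2 else 0)
      (Matrix.of fun i j => if (i : ℕ) = (j : ℕ) ∧ (i : ℕ) < 2 then 1 else 0)

/-- `A` and `B` are symplectically congruent. -/
def SympCongruent {n : ℕ}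
    (A B : Matrix (Fin n ⊕ Fin n) (Fin n ⊕ Fin n) ℝ) : Prop :=
  ∃ S, Sᵀ * Omega n * S = Omega n ∧ B = Sᵀ * A * S

/-- Reindexing equivalence used to define the interleaving block-direct sum. -/
def glue (p q : ℕ) : (Fin (p + q) ⊕ Fin (p + q)) ≃ ((Fin p ⊕ Fin p) ⊕ (Fin q ⊕ Fin q)) :=
  (Equiv.sumCongr finSumFinEquiv.symm finSumFinEquiv.symm).trans
    (Equiv.sumSumSumComm (Fin p) (Fin q) (Fin p) (Fin q))

/-- The block-direct sum `M ⊞ N` that interleaves the four blocks. -/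
def boxSum {p q : ℕ} (M : Matrix (Fin p ⊕ Fin p) (Fin p ⊕ Fin p) ℝ)
    (N : Matrix (Fin q ⊕ Fin q) (Fin q ⊕ Fin q) ℝ) :
    Matrix (Fin (p + q) ⊕ Fin (p + q)) (Fin (p + q) ⊕ Fin (p + q)) ℝ :=
  (Matrix.fromBlocks M 0 0 N).submatrix (glue p q) (glue p q)

/-- Total size of a list of canonical blocks. -/
def sumSize : List (Σ k : ℕ, Matrix (Fin k ⊕ Fin k) (Fin k ⊕ Fin k) ℝ) → ℕ
  | [] => 0
  | ⟨k, _⟩ :: l => k + sumSize l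

/-- Block-direct sum of a list of blocks. -/
def blockSumList :
    (l : List (Σ k : ℕ, Matrix (Fin k ⊕ Fin k) (Fin k ⊕ Fin k) ℝ)) →
      Matrix (Fin (sumSize l) ⊕ Fin (sumSize l)) (Fin (sumSize l) ⊕ Fin (sumSize l)) ℝ
  | [] => 0
  | ⟨_, M⟩ :: l => boxSum M (blockSumList l)

/-- Membership in the canonical list of the paper. -/
def IsCanonical (b : Σ k : ℕ, Matrix (Fin k ⊕ Fin k) (Fin k ⊕ Fin k) ℝ) : Prop :=
  (∃ Φ : Matrix (Fin b.1) (Fin b.1) ℝ, b.2 = Matrix.fromBlocks 0 Φ Φᵀ 0) ∨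
    b.2 = Pmat b.1 ∨ b.2 = -Pmat b.1 ∨
    ∃ c : ℝ, 0 < c ∧ (b.2 = Qmat b.1 c ∨ b.2 = -Qmat b.1 c)

section Aux

lemma not_posDef_of_diag_nonpos {n : Type*} [Fintype n] [DecidableEq n]
    {M : Matrix n n ℝ} {i : n} (h : M i i ≤ 0) : ¬ M.PosDef := by
  intro hM
  have h1 : (Pi.single i 1 : n → ℝ) ≠ 0 := by
    intro h0; simpa using congrFun h0 i
  have h2 := hM.dotProduct_mulVec_pos h1
  rw [star_trivial, single_dotProduct, one_mul, mulVec_single] at h2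
  simp at h2
  linarith

lemma posDef_conj_t {n m : Type*} [Fintype n] [Fintype m] {A : Matrix n n ℝ}
    (hA : A.PosDef) (B : Matrix n m ℝ) (hB : Function.Injective B.mulVec) :
    (Bᵀ * A * B).PosDef := by
  rw [← conjTranspose_eq_transpose_of_trivial]
  refine PosDef.of_dotProduct_mulVec_pos (isHermitian_conjTranspose_mul_mul B hA.1) (fun x hx => ?_)
  have hBx : B *ᵥ x ≠ 0 := fun h => hx (hB (h.trans (mulVec_zero B).symm))
  simpa only [star_mulVec, dotProduct_mulVec, vecMul_vecMul] using hA.dotProduct_mulVec_pos hBx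

lemma posDef_submatrix {m n : Type*} [Fintype m] [Fintype n] [DecidableEq n] [DecidableEq m]
    {M : Matrix n n ℝ} (hM : M.PosDef) {e : m → n} (he : Function.Injective e) :
    (M.submatrix e e).PosDef := by
  have hinj : Function.Injective ((1 : Matrix n n ℝ).submatrix id e).mulVec := by
    intro x y hxy
    funext i
    have := congrFun hxy (e i)
    simpa [mulVec, dotProduct, one_apply, he.eq_iff, ite_mul] using this
  have key := posDef_conj_t hM _ hinj
  rw [(by simp : M = 1 * M * 1), submatrix_mul (he₂ := Function.bijective_id),
    submatrix_mul (he₂ := Function.bijective_id), submatrix_id_id]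
  convert key using 2
  ext i j
  simp [transpose_apply, one_apply, eq_comm]

lemma Qmat_one (c : ℝ) :
    Qmat 1 c = Matrix.fromBlocks (Matrix.diagonal fun _ : Fin 1 => c) 0 0
      (Matrix.diagonal fun _ : Fin 1 => c) := by
  ext i j
  rcases i with i | i <;> rcases j with j | j <;>
    fin_cases i <;> fin_cases j <;>
      simp [Qmat, Matrix.fromBlocks, Matrix.diagonal]

lemma Qmat_diag_zero {k : ℕ} (c : ℝ) (hk : 0 < k) (hk1 : k ≠ 1) :
    Qmat k c (Sum.inl ⟨0, hk⟩) (Sum.inl ⟨0, hk⟩) = 0 := by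
  by_cases hpar : k % 2 = 1 <;>
    simp [Qmat, hpar, Matrix.fromBlocks, Ne.symm hk1]

lemma part1 (k : ℕ) (M : Matrix (Fin k) (Fin k) ℝ) (hk : 0 < k) :
    ¬ (Matrix.fromBlocks 0 M Mᵀ 0).PosDef :=
  not_posDef_of_diag_nonpos (i := Sum.inl ⟨0, hk⟩) (by simp [Matrix.fromBlocks])

lemma part2 (k : ℕ) (hk : 0 < k) : ¬ (Pmat k).PosDef ∧ ¬ (-Pmat k).PosDef := by
  constructor
  · exact not_posDef_of_diag_nonpos (i := Sum.inr ⟨0, hk⟩)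
      (by simp [Pmat, Matrix.fromBlocks, hk.ne])
  · exact not_posDef_of_diag_nonpos (i := Sum.inr ⟨0, hk⟩)
      (by simp [Pmat, Matrix.fromBlocks, hk.ne])

lemma part3 (k : ℕ) (c : ℝ) (hk : 0 < k) (hc : 0 < c) :
    ((Qmat k c).PosDef ↔ k = 1) ∧ ¬ (-Qmat k c).PosDef := by
  constructor
  · constructor
    · intro hpd
      by_contra hk1
      exact not_posDef_of_diag_nonpos (Qmat_diag_zero c hk hk1).le hpd
    · rintro rfl
      rw [Qmat_one, Matrix.fromBlocks_diagonal]
      exact Matrix.PosDef.diagonal (fun i => by rcases i with i | i <;> simpa using hc)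
  · by_cases hk1 : k = 1
    · subst hk1
      refine not_posDef_of_diag_nonpos (i := Sum.inl ⟨0, one_pos⟩) ?_
      rw [Matrix.neg_apply, Qmat_one]
      simp [Matrix.fromBlocks, Matrix.diagonal]
      linarith
    · refine not_posDef_of_diag_nonpos (i := Sum.inl ⟨0, hk⟩) ?_
      rw [Matrix.neg_apply, Qmat_diag_zero c hk hk1]
      simp

lemma boxSum_diag {p q : ℕ} (a : Fin p → ℝ) (b : Fin q → ℝ) :
    boxSum (fromBlocks (diagonal a) 0 0 (diagonal a)) (fromBlocks (diagonal b) 0 0 (diagonal b))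
      = fromBlocks (diagonal fun i => Sum.elim a b (finSumFinEquiv.symm i)) 0 0
          (diagonal fun i => Sum.elim a b (finSumFinEquiv.symm i)) := by
  ext x y
  have einj : ∀ i j : Fin (p + q),
      (i = j) ↔ (finSumFinEquiv.symm i = finSumFinEquiv.symm j) :=
    fun i j => (finSumFinEquiv (m := p) (n := q)).symm.injective.eq_iff.symm
  rcases x with i | i <;> rcases y with j | j <;>
    rcases hu : finSumFinEquiv.symm i with u | u <;>
      rcases hv : finSumFinEquiv.symm j with v | v <;>
        simp [boxSum, glue, Matrix.fromBlocks, Matrix.diagonal, einj i j, hu, hv]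

lemma boxSum_posDef {p q : ℕ} {M : Matrix (Fin p ⊕ Fin p) (Fin p ⊕ Fin p) ℝ}
    {N : Matrix (Fin q ⊕ Fin q) (Fin q ⊕ Fin q) ℝ} (h : (boxSum M N).PosDef) :
    M.PosDef ∧ N.PosDef := by
  have hF : (Matrix.fromBlocks M 0 0 N).PosDef := by
    have h2 := posDef_submatrix h (glue p q).symm.injective
    rwa [boxSum, Matrix.submatrix_submatrix, Equiv.self_comp_symm,
      Matrix.submatrix_id_id] at h2
  constructor
  · have hsub := posDef_submatrix hF (e := (Sum.inl : Fin p ⊕ Fin p → (Fin p ⊕ Fin p) ⊕ (Fin q ⊕ Fin q))) Sum.inl_injective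
    have he : (Matrix.fromBlocks M 0 0 N).submatrix Sum.inl Sum.inl = M := by
      ext i j; simp [Matrix.fromBlocks]
    rwa [he] at hsub
  · have hsub := posDef_submatrix hF (e := (Sum.inr : Fin q ⊕ Fin q → (Fin p ⊕ Fin p) ⊕ (Fin q ⊕ Fin q))) Sum.inr_injective
    have he : (Matrix.fromBlocks M 0 0 N).submatrix Sum.inr Sum.inr = N := by
      ext i j; simp [Matrix.fromBlocks]
    rwa [he] at hsub

lemma key : ∀ (l : List (Σ k : ℕ, Matrix (Fin k ⊕ Fin k) (Fin k ⊕ Fin k) ℝ)),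
    (∀ b ∈ l, IsCanonical b) → (blockSumList l).PosDef →
    ∃ α : Fin (sumSize l) → ℝ, (∀ i, 0 < α i) ∧
      blockSumList l = Matrix.fromBlocks (Matrix.diagonal α) 0 0 (Matrix.diagonal α)
  | [] => by
      intro _ _
      refine ⟨fun i => i.elim0, fun i => i.elim0, ?_⟩
      ext i j
      rcases i with i | i <;> exact i.elim0
  | ⟨k, M⟩ :: l => by
      intro hcan hpd
      have hMN := boxSum_posDef (p := k) (q := sumSize l) (M := M) (N := blockSumList l) hpd
      obtain ⟨α, hα, hNeq⟩ := key l (fun b hb => hcan b (List.mem_cons_of_mem _ hb)) hMN.2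
      have hc : IsCanonical ⟨k, M⟩ := hcan ⟨k, M⟩ List.mem_cons_self
      have hM : M.PosDef := hMN.1
      have hMdiag : ∃ a : Fin k → ℝ, (∀ i, 0 < a i) ∧
          M = Matrix.fromBlocks (Matrix.diagonal a) 0 0 (Matrix.diagonal a) := by
        rcases Nat.eq_zero_or_pos k with hk | hk
        · subst hk
          refine ⟨fun _ => 1, fun i => i.elim0, ?_⟩
          ext i j
          rcases i with i | i <;> exact i.elim0
        · rcases hc with ⟨Φ, hΦ⟩ | hP | hP | ⟨c, hcpos, hQ | hQ⟩
        
          · exact absurd (hΦ ▸ hM) (part1 k Φ hk)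
          · exact absurd (hP ▸ hM) (part2 k hk).1
          · exact absurd (hP ▸ hM) (part2 k hk).2
          · have hk1 : k = 1 := (part3 k c hk hcpos).1.mp (hQ ▸ hM)
            subst hk1
            exact ⟨fun _ => c, fun _ => hcpos, by rw [show M = Qmat 1 c from hQ, Qmat_one]⟩
          · exact absurd (hQ ▸ hM) (part3 k c hk hcpos).2
      obtain ⟨a, ha, hMeq⟩ := hMdiag
      refine ⟨fun i => Sum.elim a α (finSumFinEquiv.symm i), fun i => ?_, ?_⟩
      · rcases h : finSumFinEquiv.symm i with u | u
        · simpa [h] using ha u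
        · simpa [h] using hα u
      · show boxSum M (blockSumList l) = _
        rw [hMeq, hNeq, boxSum_diag]
        rfl

end Aux

/-- Among the canonical matrices only `Q_1(c) = diag(c, c)` with `c > 0` is
positive definite; consequently every positive definite symmetric matrix that is
symplectically congruent to a block-direct sum of canonical matrices is
symplectically congruent to `D ⊕ D` with `D` diagonal with positive entries. -/
theorem stmt16 :
    (∀ (k : ℕ) (M : Matrix (Fin k) (Fin k) ℝ), 0 < k →
      ¬ (Matrix.fromBlocks 0 M Mᵀ 0).PosDef) ∧
    (∀ k : ℕ, 0 < k → ¬ (Pmat k).PosDef ∧ ¬ (-Pmat k).PosDef) ∧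
    (∀ (k : ℕ) (c : ℝ), 0 < k → 0 < c →
      (((Qmat k c).PosDef ↔ k = 1) ∧ ¬ (-Qmat k c).PosDef)) ∧
    (∀ (n : ℕ) (A : Matrix (Fin n ⊕ Fin n) (Fin n ⊕ Fin n) ℝ), A.PosDef →
      (∃ (l : List (Σ k : ℕ, Matrix (Fin k ⊕ Fin k) (Fin k ⊕ Fin k) ℝ))
          (h : sumSize l = n), (∀ b ∈ l, IsCanonical b) ∧
          SympCongruent A
            (cast (congrArg (fun k => Matrix (Fin k ⊕ Fin k) (Fin k ⊕ Fin k) ℝ) h)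
              (blockSumList l))) →
      ∃ α : Fin n → ℝ, (∀ i, 0 < α i) ∧
        SympCongruent A
          (Matrix.fromBlocks (Matrix.diagonal α) 0 0 (Matrix.diagonal α))) := by
  refine ⟨part1, fun k hk => part2 k hk, fun k c hk hc => part3 k c hk hc, ?_⟩
  intro n A hA ⟨l, h, hcanl, hcong⟩
  subst h
  have hcong' : SympCongruent A (blockSumList l) := hcong
  obtain ⟨S, hS, hB⟩ := hcong'
  have hΩ : IsUnit (Omega (sumSize l)).det := by
    apply Matrix.isUnit_det_of_right_inverse (B := -(Omega (sumSize l)))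
    simp [Omega, Matrix.fromBlocks_multiply, Matrix.fromBlocks_neg, Matrix.fromBlocks_one,
      neg_neg, neg_zero]
  have hdetS : IsUnit S.det := by
    have hdet := congrArg Matrix.det hS
    rw [Matrix.det_mul, Matrix.det_mul, Matrix.det_transpose] at hdet
    have h2 : S.det * S.det * (Omega (sumSize l)).det = 1 * (Omega (sumSize l)).det := by
      rw [one_mul]; linarith [hdet]
    have h3 := mul_right_cancel₀ hΩ.ne_zero h2
    exact isUnit_iff_ne_zero.mpr (by intro h0; rw [h0] at h3; simp at h3)
  have hBpd : (blockSumList l).PosDef := by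
    rw [hB]
    exact posDef_conj_t hA S (Matrix.mulVec_injective_iff_isUnit.mpr
      (Matrix.isUnit_iff_isUnit_det S |>.mpr hdetS))
  obtain ⟨α, hα, heq⟩ := key l hcanl hBpd
  exact ⟨α, hα, heq ▸ ⟨S, hS, hB⟩⟩
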